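/- Every independent set of size n−1 in the whiskered graph w(H) (where H has n vertices) is contained in at most two maximal independent sets of w(H). -/

import Mathlib

def whisker {n : ℕ} (H : SimpleGraph (Fin n)) : SimpleGraph (Fin n ⊕ Fin n) :=
  SimpleGraph.fromRel (fun u v =>
    (∃ i j, H.Adj i j ∧ u = Sum.inl i ∧ v = Sum.inl j) ∨ ∃ i, u = Sum.inl i ∧ v = Sum.inr i)

def IsIndep {V : Type*} (G : SimpleGraph V) (S : Set V) : Prop :=
  ∀ u ∈ S, ∀ v ∈ S, ¬ G.Adj u v

/-- A maximal independent set: an independent set not properly contained in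
another independent set. -/
def MaxIndep {V : Type*} [DecidableEq V] (G : SimpleGraph V) (F : Finset V) : Prop :=
  IsIndep G ↑F ∧ ∀ F' : Finset V, IsIndep G ↑F' → F ⊆ F' → F = F'

lemma whisker_adj_lr {n : ℕ} (H : SimpleGraph (Fin n)) (i : Fin n) :
    (whisker H).Adj (Sum.inl i) (Sum.inr i) := by
  simp [whisker, SimpleGraph.fromRel_adj]

lemma adj_of_idx_eq {n : ℕ} (H : SimpleGraph (Fin n)) {u v : Fin n ⊕ Fin n}
    (h : Sum.elim id id u = Sum.elim id id v) (hne : u ≠ v) :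
    (whisker H).Adj u v := by
  cases u with
  | inl a =>
    cases v with
    | inl b => simp_all
    | inr b =>
      simp only [Sum.elim_inl, Sum.elim_inr, id_eq] at h
      subst h; exact whisker_adj_lr H a
  | inr a =>
    cases v with
    | inl b =>
      simp only [Sum.elim_inl, Sum.elim_inr, id_eq] at h
      subst h; exact (whisker_adj_lr H a).symm
    | inr b => simp_all

lemma adj_inr {n : ℕ} (H : SimpleGraph (Fin n)) {u : Fin n ⊕ Fin n} {i : Fin n}
    (h : (whisker H).Adj u (Sum.inr i)) : u = Sum.inl i := by
  rw [whisker, SimpleGraph.fromRel_adj] at h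
  obtain ⟨-, h | h⟩ := h
  · rcases h with ⟨a, b, -, -, hb⟩ | ⟨a, ha, hb⟩
    · exact absurd hb (by simp)
    · obtain rfl := Sum.inr.inj hb
      exact ha
  · rcases h with ⟨a, b, -, ha, -⟩ | ⟨a, ha, -⟩ <;> exact absurd ha (by simp)

/-- Every independent set of size `n - 1` in the whiskered graph `w(H)` is
contained in at most two maximal independent sets of `w(H)`. -/
theorem faces_in_at_most_two_facets {n : ℕ} (H : SimpleGraph (Fin n))
    (F : Finset (Fin n ⊕ Fin n)) (hF : IsIndep (whisker H) ↑F)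
    (hcard : F.card = n - 1) :
    Set.ncard {M : Finset (Fin n ⊕ Fin n) | MaxIndep (whisker H) M ∧ F ⊆ M} ≤ 2 := by
  rcases Nat.eq_zero_or_pos n with rfl | hn
  · have hsub : {M : Finset (Fin 0 ⊕ Fin 0) | MaxIndep (whisker H) M ∧ F ⊆ M} ⊆
        {(∅ : Finset (Fin 0 ⊕ Fin 0))} := by
      intro M _
      simp only [Set.mem_singleton_iff]
      ext x
      cases x with
      | inl a => exact a.elim0
      | inr a => exact a.elim0
    calc Set.ncard _ ≤ Set.ncard {(∅ : Finset (Fin 0 ⊕ Fin 0))} :=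
          Set.ncard_le_ncard hsub (Set.finite_singleton _)
      _ ≤ 2 := by simp
  · set idx : Fin n ⊕ Fin n → Fin n := Sum.elim id id with hidx
    -- injectivity of idx on any independent set
    have hinj : ∀ S : Finset (Fin n ⊕ Fin n), IsIndep (whisker H) ↑S →
        Set.InjOn idx ↑S := by
      intro S hS u hu v hv huv
      by_contra hne
      exact hS u hu v hv (adj_of_idx_eq H huv hne)
    have hI : (F.image idx).card = n - 1 := by
      rw [Finset.card_image_of_injOn (hinj F hF), hcard]
    -- find the missing index i
    obtain ⟨i, hi⟩ : ∃ i : Fin n, i ∉ F.image idx := by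
      by_contra hc
      push_neg at hc
      have : F.image idx = Finset.univ := Finset.eq_univ_iff_forall.mpr hc
      rw [this] at hI
      simp only [Finset.card_univ, Fintype.card_fin] at hI
      omega
    have hiuniq : ∀ j : Fin n, j ∉ F.image idx → j = i := by
      intro j hj
      by_contra hne
      have hsub : insert j {i} ⊆ (F.image idx)ᶜ := by
        intro x hx
        simp only [Finset.mem_insert, Finset.mem_singleton] at hx
        rcases hx with rfl | rfl
        · exact Finset.mem_compl.mpr hj
        · exact Finset.mem_compl.mpr hi
      have h2 : (insert j ({i} : Finset (Fin n))).card = 2 := by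
        rw [Finset.card_insert_of_notMem (by simpa using hne)]; simp
      have hcc : ((F.image idx)ᶜ).card = 1 := by
        rw [Finset.card_compl, hI]
        simp only [Fintype.card_fin]
        omega
      have := Finset.card_le_card hsub
      omega
    have hinlF : Sum.inl i ∉ F := fun h => hi (Finset.mem_image_of_mem idx h)
    have hinrF : Sum.inr i ∉ F := fun h => hi (Finset.mem_image_of_mem idx h)
    -- main subset claim
    have hsub : {M : Finset (Fin n ⊕ Fin n) | MaxIndep (whisker H) M ∧ F ⊆ M} ⊆
        {insert (Sum.inl i) F, insert (Sum.inr i) F} := by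
      rintro M ⟨⟨hMind, hMmax⟩, hFM⟩
      -- every element of M outside F is inl i or inr i
      have hout : ∀ m ∈ M, m ∉ F → m = Sum.inl i ∨ m = Sum.inr i := by
        intro m hm hmF
        have hmi : idx m ∉ F.image idx := by
          intro hmem
          obtain ⟨f, hf, hfm⟩ := Finset.mem_image.mp hmem
          have hne : f ≠ m := fun h => hmF (h ▸ hf)
          exact hMind f (hFM hf) m hm (adj_of_idx_eq H hfm hne)
        have := hiuniq _ hmi
        cases m with
        | inl a => left; simp only [hidx, Sum.elim_inl, id_eq] at this; rw [this]
        | inr a => right; simp only [hidx, Sum.elim_inr, id_eq] at this; rw [this]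
      -- M ≠ F
      have hMneF : M ≠ F := by
        rintro rfl
        have hindep : IsIndep (whisker H) ↑(insert (Sum.inr i) M) := by
          intro u hu v hv hadj
          simp only [Finset.coe_insert, Set.mem_insert_iff] at hu hv
          rcases hu with rfl | hu
          · rcases hv with rfl | hv
            · exact (whisker H).loopless.irrefl _ hadj
            · have := adj_inr H hadj.symm
              subst this
              exact hinlF hv
          · rcases hv with rfl | hv
            · have := adj_inr H hadj
              subst this
              exact hinlF hu
            · exact hMind u hu v hv hadj
        have := hMmax _ hindep (Finset.subset_insert _ _)
        have : Sum.inr i ∈ M := this ▸ Finset.mem_insert_self _ _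
        exact hinrF this
      simp only [Set.mem_insert_iff, Set.mem_singleton_iff]
      by_cases hl : Sum.inl i ∈ M
      · left
        apply Finset.Subset.antisymm
        · intro m hm
          rcases Classical.em (m ∈ F) with h | h
          · exact Finset.mem_insert_of_mem h
          · rcases hout m hm h with rfl | rfl
            · exact Finset.mem_insert_self _ _
            · exact absurd (whisker_adj_lr H i) (hMind _ hl _ hm)
        · exact Finset.insert_subset hl hFM
      · right
        have hr : Sum.inr i ∈ M := by
          by_contra hr
          apply hMneF
          apply Finset.Subset.antisymm _ hFM
          intro m hm
          rcases Classical.em (m ∈ F) with h | h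
          · exact h
          · rcases hout m hm h with rfl | rfl
            · exact absurd hm hl
            · exact absurd hm hr
        apply Finset.Subset.antisymm
        · intro m hm
          rcases Classical.em (m ∈ F) with h | h
          · exact Finset.mem_insert_of_mem h
          · rcases hout m hm h with rfl | rfl
            · exact absurd hm hl
            · exact Finset.mem_insert_self _ _
        · exact Finset.insert_subset hr hFM
    calc Set.ncard _ ≤ Set.ncard {insert (Sum.inl i) F, insert (Sum.inr i) F} :=
          Set.ncard_le_ncard hsub (Set.toFinite _)
      _ ≤ 2 := (Set.ncard_insert_le _ _).trans (by simp)
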